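/- Let n ≥ 2, 0 ≤ λ ≤ 1, and let ρ be a Hermitian matrix on ℂ^n. If the matrix ρ ⊗ (I_n/n) + λ(|Ψ_n⟩⟨Ψ_n| − (I_n/n) ⊗ (I_n/n)) is positive semidefinite, then ρ − λ·(I_n/n) is positive semidefinite. -/

import Mathlib

open Matrix
open scoped Kronecker ComplexOrder

/-- The maximally entangled state `Ψ_n = (1/√n) Σ_k e_k ⊗ e_k` on `ℂ^n ⊗ ℂ^n`. -/
noncomputable def maxEntVec (n : ℕ) : Fin n × Fin n → ℂ :=
  fun p => if p.1 = p.2 then ((Real.sqrt n : ℂ))⁻¹ else 0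

/-- The rank-one projection `|Ψ_n⟩⟨Ψ_n|`. -/
noncomputable def maxEntProj (n : ℕ) : Matrix (Fin n × Fin n) (Fin n × Fin n) ℂ :=
  Matrix.vecMulVec (maxEntVec n) (star (maxEntVec n))

/-- The maximally mixed state `I_n / n`. -/
noncomputable def maxMixed (n : ℕ) : Matrix (Fin n) (Fin n) ℂ := (n : ℂ)⁻¹ • 1

private lemma kron_mulVec {n : ℕ} (A B : Matrix (Fin n) (Fin n) ℂ) (v w : Fin n → ℂ) :
    (A ⊗ₖ B) *ᵥ (fun p : Fin n × Fin n => v p.1 * w p.2)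
    = fun p => (A *ᵥ v) p.1 * (B *ᵥ w) p.2 := by
  funext p
  simp only [mulVec, dotProduct, kroneckerMap_apply, Fintype.sum_prod_type, Finset.sum_mul,
    Finset.mul_sum]
  rw [Finset.sum_comm]
  apply Finset.sum_congr rfl; intro k _
  apply Finset.sum_congr rfl; intro l _
  ring

private lemma kron_quad {n : ℕ} (A B : Matrix (Fin n) (Fin n) ℂ) (v w : Fin n → ℂ) :
    star (fun p : Fin n × Fin n => v p.1 * w p.2) ⬝ᵥ
      ((A ⊗ₖ B) *ᵥ fun p : Fin n × Fin n => v p.1 * w p.2)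
    = (star v ⬝ᵥ (A *ᵥ v)) * (star w ⬝ᵥ (B *ᵥ w)) := by
  rw [kron_mulVec]
  simp only [dotProduct, Pi.star_apply, Fintype.sum_prod_type, star_mul', Finset.sum_mul,
    Finset.mul_sum]
  rw [Finset.sum_comm]
  apply Finset.sum_congr rfl; intro k _
  apply Finset.sum_congr rfl; intro l _
  ring

private lemma psi_orth (n : ℕ) (v w : Fin n → ℂ) (h : ∑ k, v k * w k = 0) :
    star (maxEntVec n) ⬝ᵥ (fun p : Fin n × Fin n => v p.1 * w p.2) = 0 := by
  simp only [dotProduct, Pi.star_apply, maxEntVec, Fintype.sum_prod_type, apply_ite,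
    star_zero, ite_mul, zero_mul]
  simp only [Finset.sum_ite_eq, Finset.mem_univ, if_true, ← Finset.mul_sum, h, mul_zero]

private lemma vmv_mulVec (m : Type*) [Fintype m] (a b x : m → ℂ) :
    Matrix.vecMulVec a b *ᵥ x = (b ⬝ᵥ x) • a := by
  funext p
  simp only [vecMulVec_apply, mulVec, dotProduct, Finset.sum_mul, Pi.smul_apply, smul_eq_mul]
  apply Finset.sum_congr rfl; intros; ring

private lemma mixed_quad (n : ℕ) (u : Fin n → ℂ) :
    star u ⬝ᵥ (maxMixed n *ᵥ u) = (n : ℂ)⁻¹ * (star u ⬝ᵥ u) := by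
  simp [maxMixed, smul_mulVec, dotProduct_smul]

theorem stmt2 (n : ℕ) (hn : 2 ≤ n) (lam : ℝ) (hlam0 : 0 ≤ lam) (hlam1 : lam ≤ 1)
    (ρ : Matrix (Fin n) (Fin n) ℂ) (hρ : ρ.IsHermitian)
    (hpos : (ρ ⊗ₖ maxMixed n + (lam : ℂ) • (maxEntProj n - maxMixed n ⊗ₖ maxMixed n)).PosSemidef) :
    (ρ - (lam : ℂ) • maxMixed n).PosSemidef := by
  rw [posSemidef_iff_dotProduct_mulVec]
  constructor
  · apply hρ.sub
    show ((lam : ℂ) • maxMixed n)ᴴ = _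
    unfold maxMixed
    ext i j
    simp only [conjTranspose_apply, Matrix.smul_apply, one_apply, smul_eq_mul, mul_ite, mul_one,
      mul_zero, apply_ite, star_zero, star_mul', star_inv₀, Complex.star_def,
      Complex.conj_ofReal, Complex.conj_natCast]
    split_ifs with h1 h2 h2 <;> simp_all [eq_comm]
  · intro v
    by_cases hv : v = 0
    · simp [hv]
    haveI : Nontrivial (Fin n) := ⟨⟨⟨0, by omega⟩, ⟨1, by omega⟩, by simp [Fin.ext_iff]⟩⟩
    obtain ⟨j, hj⟩ := Function.ne_iff.mp hv
    simp only [Pi.zero_apply] at hj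
    obtain ⟨i, hij⟩ := exists_ne j
    set w : Fin n → ℂ := fun k => if k = i then v j else if k = j then -v i else 0 with hw
    have hsum : ∑ k, v k * w k = 0 := by
      have key : ∀ k, v k * w k =
          (if k = i then v i * v j else 0) + (if k = j then -(v j * v i) else 0) := by
        intro k
        by_cases h1 : k = i
        · subst h1; simp [hw, hij, mul_comm]
        · by_cases h2 : k = j
          · subst h2; simp [hw, h1]
          · simp [hw, h1, h2]
      rw [Finset.sum_congr rfl fun k _ => key k, Finset.sum_add_distrib,
        Finset.sum_ite_eq' Finset.univ i, Finset.sum_ite_eq' Finset.univ j]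
      simp
      ring
    have hwne : w ≠ 0 := by
      intro h
      have := congrFun h i
      simp [hw, hij] at this
      exact hj this
    have hWpos : 0 < star w ⬝ᵥ w := Matrix.dotProduct_star_self_pos_iff.mpr hwne
    set W := star w ⬝ᵥ w with hWdef
    set x : Fin n × Fin n → ℂ := fun p => v p.1 * w p.2 with hx
    have hQ := hpos.dotProduct_mulVec_nonneg x
    rw [add_mulVec, smul_mulVec, sub_mulVec, dotProduct_add, dotProduct_smul,
      dotProduct_sub] at hQ
    have hP : maxEntProj n *ᵥ x = 0 := by
      rw [maxEntProj, vmv_mulVec, psi_orth n v w hsum, zero_smul]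
    rw [hP, dotProduct_zero] at hQ
    have h1 : star x ⬝ᵥ ((ρ ⊗ₖ maxMixed n) *ᵥ x)
        = (star v ⬝ᵥ (ρ *ᵥ v)) * ((n : ℂ)⁻¹ * W) := by
      rw [hx, kron_quad]
      congr 1
      exact mixed_quad n w
    have h2 : star x ⬝ᵥ ((maxMixed n ⊗ₖ maxMixed n) *ᵥ x)
        = ((n : ℂ)⁻¹ * (star v ⬝ᵥ v)) * ((n : ℂ)⁻¹ * W) := by
      rw [hx, kron_quad, mixed_quad, mixed_quad]
    rw [h1, h2] at hQ
    set A := star v ⬝ᵥ (ρ *ᵥ v) with hA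
    set V := star v ⬝ᵥ v with hV
    have hgoal : star v ⬝ᵥ ((ρ - (lam : ℂ) • maxMixed n) *ᵥ v)
        = A - (lam : ℂ) * ((n : ℂ)⁻¹ * V) := by
      rw [sub_mulVec, dotProduct_sub, smul_mulVec, dotProduct_smul, mixed_quad,
        smul_eq_mul]
    rw [hgoal]
    -- hQ : 0 ≤ A * ((n:ℂ)⁻¹ * W) + lam • (0 - (n⁻¹ V) * (n⁻¹ W))
    have hfact : A * ((n : ℂ)⁻¹ * W) + (lam : ℂ) • (0 - ((n : ℂ)⁻¹ * V) * ((n : ℂ)⁻¹ * W))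
        = ((n : ℂ)⁻¹ * W) * (A - (lam : ℂ) * ((n : ℂ)⁻¹ * V)) := by
      simp only [smul_eq_mul]; ring
    rw [hfact] at hQ
    -- extract positivity of the scalar
    have hWre : 0 < W.re := (Complex.lt_def.mp hWpos).1
    have hWim : W.im = 0 := ((Complex.lt_def.mp hWpos).2).symm
    set T := A - (lam : ℂ) * ((n : ℂ)⁻¹ * V) with hT
    have hn0 : (0:ℝ) < (n:ℝ) := by positivity
    set c : ℝ := (n:ℝ)⁻¹ * W.re with hc
    have hcpos : 0 < c := by positivity
    have hcast : ((n:ℕ):ℂ)⁻¹ * W = ((c:ℝ):ℂ) := by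
      have h4 : ((n:ℕ):ℂ)⁻¹ = (((n:ℝ)⁻¹ : ℝ) : ℂ) := by push_cast; ring
      rw [h4]
      apply Complex.ext <;>
        simp [Complex.mul_re, Complex.mul_im, hWim, hc]
    rw [hcast] at hQ
    obtain ⟨hre, him⟩ := Complex.nonneg_iff.mp hQ
    simp only [Complex.mul_re, Complex.mul_im, Complex.ofReal_re, Complex.ofReal_im,
      zero_mul, sub_zero, zero_add, mul_zero, add_zero] at hre him
    have hTre : 0 ≤ T.re := by nlinarith
    have hTim : T.im = 0 := by
      rcases mul_eq_zero.mp him.symm with h | h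
      · exact absurd h (ne_of_gt hcpos)
      · exact h
    exact Complex.nonneg_iff.mpr ⟨hTre, hTim.symm⟩
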